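/- arXiv:2102.04692 — 2 statements merged into one kernel-verified Lean document; each statement's English description precedes it below -/
import Mathlib

section
/- For every positive integer t, the weighted sum of 1/√i under the coefficients α^i_t satisfies the two-sided bound 1/√t ≤ ∑_{i=1}^{t} α^i_t / √i ≤ 2/√t. -/
/-- Learning rate `α_t = (H+1)/(H+t)`. -/
noncomputable def lr (H t : ℕ) : ℝ := (H + 1) / (H + t)

/-- The coefficient `α^i_t`: for `i = 0` it is `∏_{j=1}^t (1 - α_j)`, and for
`i ≥ 1` it is `α_i · ∏_{j=i+1}^t (1 - α_j)`. -/
noncomputable def alphaC (H i t : ℕ) : ℝ :=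
  if i = 0 then ∏ j ∈ Finset.Icc 1 t, (1 - lr H j)
  else lr H i * ∏ j ∈ Finset.Icc (i + 1) t, (1 - lr H j)

lemma lr_nonneg (H t : ℕ) : 0 ≤ lr H t := by
  unfold lr; exact div_nonneg (by positivity) (by positivity)

lemma lr_le_one (H t : ℕ) (ht : 1 ≤ t) : lr H t ≤ 1 := by
  unfold lr
  have h1 : (1:ℝ) ≤ (t:ℝ) := by exact_mod_cast ht
  rw [div_le_one (by positivity)]
  linarith

lemma alphaC_nonneg (H i t : ℕ) (hi : 1 ≤ i) : 0 ≤ alphaC H i t := by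
  unfold alphaC
  rw [if_neg (by omega)]
  refine mul_nonneg (lr_nonneg H i) (Finset.prod_nonneg ?_)
  intro j hj
  simp only [Finset.mem_Icc] at hj
  have := lr_le_one H j (by omega)
  linarith

lemma alphaC_succ (H i t : ℕ) (h1 : 1 ≤ i) (h2 : i ≤ t) :
    alphaC H i (t+1) = (1 - lr H (t+1)) * alphaC H i t := by
  unfold alphaC
  rw [if_neg (by omega), if_neg (by omega),
    Finset.prod_Icc_succ_top (by omega : i + 1 ≤ t + 1)]
  ring

lemma alphaC_self (H t : ℕ) (ht : 1 ≤ t) : alphaC H t t = lr H t := by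
  unfold alphaC
  rw [if_neg (by omega), Finset.Icc_eq_empty (by omega), Finset.prod_empty, mul_one]

lemma sum_rec (H t : ℕ) (f : ℕ → ℝ) (ht : 1 ≤ t) :
    ∑ i ∈ Finset.Icc 1 (t+1), alphaC H i (t+1) * f i
      = (1 - lr H (t+1)) * ∑ i ∈ Finset.Icc 1 t, alphaC H i t * f i
        + lr H (t+1) * f (t+1) := by
  rw [Finset.sum_Icc_succ_top (by omega : 1 ≤ t + 1), alphaC_self H (t+1) (by omega),
    Finset.mul_sum]
  congr 1
  refine Finset.sum_congr rfl ?_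
  intro i hi
  simp only [Finset.mem_Icc] at hi
  rw [alphaC_succ H i t hi.1 hi.2]
  ring

lemma sum_alpha (H : ℕ) : ∀ t, 1 ≤ t → ∑ i ∈ Finset.Icc 1 t, alphaC H i t = 1 := by
  intro t ht
  induction t, ht using Nat.le_induction with
  | base =>
    rw [Finset.Icc_self, Finset.sum_singleton, alphaC_self H 1 le_rfl]
    unfold lr
    push_cast
    rw [div_self (by positivity)]
  | succ t ht ih =>
    have h := sum_rec H t (fun _ => 1) ht
    simp only [mul_one] at h
    rw [h, ih]
    ring

theorem stmt_1 (H : ℕ) (hH : 1 ≤ H) (t : ℕ) (ht : 1 ≤ t) :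
    1 / Real.sqrt t ≤ ∑ i ∈ Finset.Icc 1 t, alphaC H i t / Real.sqrt i ∧
    ∑ i ∈ Finset.Icc 1 t, alphaC H i t / Real.sqrt i ≤ 2 / Real.sqrt t := by
  constructor
  · -- lower bound
    have h1 : ∑ i ∈ Finset.Icc 1 t, alphaC H i t / Real.sqrt t
        ≤ ∑ i ∈ Finset.Icc 1 t, alphaC H i t / Real.sqrt i := by
      refine Finset.sum_le_sum ?_
      intro i hi
      simp only [Finset.mem_Icc] at hi
      have hi1 : (1:ℝ) ≤ (i:ℝ) := by exact_mod_cast hi.1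
      have hit : (i:ℝ) ≤ (t:ℝ) := by exact_mod_cast hi.2
      have hsi : 0 < Real.sqrt i := Real.sqrt_pos.mpr (by linarith)
      exact div_le_div_of_nonneg_left (alphaC_nonneg H i t hi.1) hsi
        (Real.sqrt_le_sqrt hit)
    calc 1 / Real.sqrt t = (∑ i ∈ Finset.Icc 1 t, alphaC H i t) / Real.sqrt t := by
          rw [sum_alpha H t ht]
      _ = ∑ i ∈ Finset.Icc 1 t, alphaC H i t / Real.sqrt t := Finset.sum_div ..
      _ ≤ _ := h1
  · -- upper bound
    induction t, ht using Nat.le_induction with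
    | base =>
      rw [Finset.Icc_self, Finset.sum_singleton, alphaC_self H 1 le_rfl]
      simp only [Nat.cast_one, Real.sqrt_one]
      unfold lr
      push_cast
      rw [div_self (by positivity)]
      norm_num
    | succ t ht ih =>
      have h := sum_rec H t (fun i => 1 / Real.sqrt i) ht
      simp only [mul_one_div] at h
      have hconv : ∀ s : ℕ, ∑ i ∈ Finset.Icc 1 s, alphaC H i s * (1 / Real.sqrt i)
          = ∑ i ∈ Finset.Icc 1 s, alphaC H i s / Real.sqrt i := by
        intro s; exact Finset.sum_congr rfl fun i _ => by rw [mul_one_div]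
      rw [h]
      set a := lr H (t+1) with ha
      have ht1 : (1:ℝ) ≤ (t:ℝ) := by exact_mod_cast ht
      have hst : 0 < Real.sqrt t := Real.sqrt_pos.mpr (by linarith)
      have hst1 : 0 < Real.sqrt (t+1:ℕ) := Real.sqrt_pos.mpr (by positivity)
      have hsq : Real.sqrt t ^ 2 = t := Real.sq_sqrt (by linarith)
      have hsq1 : Real.sqrt (t+1:ℕ) ^ 2 = (t:ℝ) + 1 := by
        rw [Real.sq_sqrt (by positivity)]; push_cast; ring
      have hD : (0:ℝ) < (H:ℝ) + t + 1 := by positivity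
      have ha' : a = ((H:ℝ)+1) / ((H:ℝ)+t+1) := by
        rw [ha]; unfold lr; push_cast; ring_nf
      have h1a : 1 - a = (t:ℝ) / ((H:ℝ)+t+1) := by
        rw [ha']; field_simp; ring
      have halenn : 0 ≤ 1 - a := by
        rw [h1a]; positivity
      have step1 : (1 - a) * ∑ i ∈ Finset.Icc 1 t, alphaC H i t / Real.sqrt i
          ≤ (1 - a) * (2 / Real.sqrt t) := mul_le_mul_of_nonneg_left ih halenn
      have key : 2 * Real.sqrt t * Real.sqrt (t+1:ℕ) ≤ 2 * t + 1 := by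
        nlinarith [sq_nonneg (Real.sqrt t - Real.sqrt (t+1:ℕ))]
      have k2 : 2*(t:ℝ)*Real.sqrt (t+1:ℕ) ≤ (2*(t:ℝ)+1)*Real.sqrt t := by
        nlinarith [mul_le_mul_of_nonneg_left key hst.le, hsq, hst1]
      have hHr : (1:ℝ) ≤ (H:ℝ) := by exact_mod_cast hH
      have k3 : 2*(t:ℝ)*Real.sqrt (t+1:ℕ) + ((H:ℝ)+1)*Real.sqrt t
          ≤ 2*((H:ℝ)+t+1)*Real.sqrt t := by
        nlinarith [k2, mul_nonneg (by linarith : (0:ℝ) ≤ (H:ℝ)) hst.le]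
      have e1 : (1 - a)*(2/Real.sqrt t) + a/Real.sqrt (t+1:ℕ)
          = (2*(t:ℝ)*Real.sqrt (t+1:ℕ) + ((H:ℝ)+1)*Real.sqrt t)
            / (((H:ℝ)+t+1)*(Real.sqrt t*Real.sqrt (t+1:ℕ))) := by
        rw [h1a, ha']
        field_simp
      have e2 : 2/Real.sqrt (t+1:ℕ)
          = (2*((H:ℝ)+t+1)*Real.sqrt t)
            / (((H:ℝ)+t+1)*(Real.sqrt t*Real.sqrt (t+1:ℕ))) := by
        field_simp
      have final : (1 - a) * (2 / Real.sqrt t) + a / Real.sqrt (t+1:ℕ)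
          ≤ 2 / Real.sqrt (t+1:ℕ) := by
        rw [e1, e2, div_le_div_iff₀ (by positivity) (by positivity)]
        nlinarith [k3, mul_pos hD (mul_pos hst hst1)]
      linarith [step1, final]
end

section
/- For every positive integer i, the infinite series ∑_{t=i}^{∞} α^i_t converges and its sum equals 1 + 1/H. -/
/-- The series `∑_{t=i}^∞ α^i_t` converges with sum `1 + 1/H`. -/
theorem stmt_2 (H : ℕ) (hH : 1 ≤ H) (i : ℕ) (hi : 1 ≤ i) :
    HasSum (fun n : ℕ => alphaC H i (i + n)) (1 + 1 / (H : ℝ)) := by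
  have hHpos : (0:ℝ) < H := by exact_mod_cast hH
  have hipos : (0:ℝ) < i := by exact_mod_cast hi
  have hH1 : (1:ℝ) ≤ H := by exact_mod_cast hH
  have hi0 : i ≠ 0 := by omega
  set b : ℕ → ℝ := fun n => ∏ k ∈ Finset.range n, ((i:ℝ)+k)/((H:ℝ)+i+k) with hb
  have hbpos : ∀ n, 0 < b n := by
    intro n
    apply Finset.prod_pos
    intro k _
    have hk : (0:ℝ) ≤ k := Nat.cast_nonneg k
    positivity
  have hb0 : b 0 = 1 := by simp [hb]
  have hbsucc : ∀ n, b (n+1) = b n * (((i:ℝ)+n)/((H:ℝ)+i+n)) := by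
    intro n
    simp only [hb]
    rw [Finset.prod_range_succ]
  have key : ∀ n, alphaC H i (i+n) = ((H:ℝ)+1) * b n / ((H:ℝ)+i+n) := by
    intro n
    induction n with
    | zero =>
      have he : Finset.Icc (i+1) i = ∅ := by
        apply Finset.Icc_eq_empty; omega
      simp [alphaC, hi0, he, lr, hb0]
    | succ n ih =>
      have h1 : alphaC H i ((i+n)+1) = alphaC H i (i+n) * (1 - lr H (i+n+1)) := by
        unfold alphaC
        rw [if_neg hi0, if_neg hi0,
          Finset.prod_Icc_succ_top (by omega : i+1 ≤ (i+n)+1)]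
        ring
      rw [show i+(n+1) = (i+n)+1 from rfl, h1, ih, hbsucc]
      have hd1 : ((H:ℝ)+(i:ℝ)+(n:ℝ)) ≠ 0 := by positivity
      have hd2 : ((H:ℝ)+(i:ℝ)+(n:ℝ)+1) ≠ 0 := by positivity
      have hlr : (1 : ℝ) - lr H (i+n+1) = ((i:ℝ)+n) / ((H:ℝ)+i+n+1) := by
        unfold lr
        push_cast
        rw [show (H:ℝ)+((i:ℝ)+(n:ℝ)+1) = (H:ℝ)+i+n+1 by ring,
          eq_div_iff hd2, sub_mul, div_mul_cancel₀ _ hd2]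
        ring
      rw [hlr]
      push_cast
      field_simp
      ring
  have hC : (1:ℝ) + 1/H = ((H:ℝ)+1)/H := by field_simp
  have hterm : ∀ n, alphaC H i (i+n)
      = (((H:ℝ)+1)/H) * b n - (((H:ℝ)+1)/H) * b (n+1) := by
    intro n
    rw [key, hbsucc]
    have hd1 : ((H:ℝ)+(i:ℝ)+(n:ℝ)) ≠ 0 := by positivity
    field_simp
    ring
  have hpartial : ∀ N, ∑ n ∈ Finset.range N, alphaC H i (i+n)
      = (((H:ℝ)+1)/H) - (((H:ℝ)+1)/H) * b N := by
    intro N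
    calc ∑ n ∈ Finset.range N, alphaC H i (i+n)
        = ∑ n ∈ Finset.range N, ((((H:ℝ)+1)/H) * b n - (((H:ℝ)+1)/H) * b (n+1)) :=
          Finset.sum_congr rfl fun n _ => hterm n
      _ = (((H:ℝ)+1)/H) * b 0 - (((H:ℝ)+1)/H) * b N :=
          Finset.sum_range_sub' (fun n => (((H:ℝ)+1)/H) * b n) N
      _ = (((H:ℝ)+1)/H) - (((H:ℝ)+1)/H) * b N := by rw [hb0, mul_one]
  have hbound : ∀ n, b n ≤ (i:ℝ) / ((i:ℝ)+n) := by
    intro n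
    induction n with
    | zero => simp [hb0, div_self hipos.ne']
    | succ n ih =>
      rw [hbsucc]
      have h1 : (0:ℝ) < (i:ℝ)+n := by positivity
      have h2 : (0:ℝ) < (H:ℝ)+i+n := by positivity
      have h3 : (0:ℝ) < (i:ℝ)+n+1 := by positivity
      have hfrac : ((i:ℝ)+n)/((H:ℝ)+i+n) ≤ ((i:ℝ)+n)/((i:ℝ)+n+1) := by
        apply div_le_div_of_nonneg_left (le_of_lt h1) h3
        linarith
      calc b n * (((i:ℝ)+n)/((H:ℝ)+i+n))
          ≤ ((i:ℝ)/((i:ℝ)+n)) * (((i:ℝ)+n)/((i:ℝ)+n+1)) :=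
            mul_le_mul ih hfrac (by positivity) (by positivity)
        _ = (i:ℝ)/((i:ℝ)+((n:ℕ)+1:ℕ)) := by
            push_cast
            rw [div_mul_div_comm, mul_comm (i:ℝ) ((i:ℝ)+n),
              mul_div_mul_left _ _ h1.ne']
            ring
  have hbtendsto : Filter.Tendsto b Filter.atTop (nhds 0) := by
    apply squeeze_zero (fun n => (hbpos n).le) hbound
    apply Filter.Tendsto.div_atTop tendsto_const_nhds
    apply Filter.tendsto_atTop_add_const_left
    exact tendsto_natCast_atTop_atTop
  rw [hasSum_iff_tendsto_nat_of_nonneg]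
  · have h2 := (hbtendsto.const_mul (((H:ℝ)+1)/H)).const_sub (((H:ℝ)+1)/H)
    rw [mul_zero, sub_zero] at h2
    rw [hC]
    exact h2.congr (fun N => (hpartial N).symm)
  · intro n
    rw [key]
    have h1 : (0:ℝ) < (H:ℝ)+i+n := by positivity
    positivity
end
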